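/- Let u : ℝⁿ → ℝ ∪ {∞} be convex with u ≥ 0 and u(0) = 0, and for h > 0 define S_h = {x : u(x) < h} and b(h) = h^{-1/2} · sup_{x ∈ S_h} x_n (assuming these suprema are finite and positive). Then for all 0 < h₁ ≤ h₂, (h₁/h₂)^{1/2} ≤ b(h₁)/b(h₂) ≤ (h₂/h₁)^{1/2}. -/

import Mathlib

open Set

/-- For a nonnegative convex function `u` with `u 0 = 0`, the quantity
`b(h) = h^{-1/2} · sup_{S_h} x_n` over the section `S_h = {u < h}` satisfies
`(h₁/h₂)^{1/2} ≤ b(h₁)/b(h₂) ≤ (h₂/h₁)^{1/2}` for `0 < h₁ ≤ h₂`. -/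
theorem stmt_0 (n : ℕ) (u : EuclideanSpace ℝ (Fin (n + 1)) → ℝ)
    (hconv : ConvexOn ℝ Set.univ u) (hnonneg : ∀ x, 0 ≤ u x) (hu0 : u 0 = 0)
    (b : ℝ → ℝ)
    (hb : ∀ h : ℝ, b h =
      h ^ (-(1 : ℝ) / 2) * sSup ((fun x => x (Fin.last n)) '' {x | u x < h}))
    (hbdd : ∀ h : ℝ, 0 < h → BddAbove ((fun x => x (Fin.last n)) '' {x | u x < h}))
    (hpos : ∀ h : ℝ, 0 < h → 0 < sSup ((fun x => x (Fin.last n)) '' {x | u x < h}))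
    (h₁ h₂ : ℝ) (hh₁ : 0 < h₁) (hle : h₁ ≤ h₂) :
    Real.sqrt (h₁ / h₂) ≤ b h₁ / b h₂ ∧ b h₁ / b h₂ ≤ Real.sqrt (h₂ / h₁) := by
  have hh₂ : 0 < h₂ := hh₁.trans_le hle
  set f : EuclideanSpace ℝ (Fin (n + 1)) → ℝ := fun x => x (Fin.last n) with hf
  set M₁ := sSup (f '' {x | u x < h₁}) with hM₁def
  set M₂ := sSup (f '' {x | u x < h₂}) with hM₂def
  have hM₁ : 0 < M₁ := hpos h₁ hh₁
  have hM₂ : 0 < M₂ := hpos h₂ hh₂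
  have hne₂ : (f '' {x | u x < h₂}).Nonempty :=
    Set.Nonempty.image f ⟨0, by simpa [hu0] using hh₂⟩
  have hmono : M₁ ≤ M₂ :=
    csSup_le_csSup (hbdd h₂ hh₂) (Set.Nonempty.image f ⟨0, by simpa [hu0] using hh₁⟩)
      (Set.image_mono (fun x hx => lt_of_lt_of_le hx hle))
  have ht : 0 < h₁ / h₂ := div_pos hh₁ hh₂
  have hscale : (h₁ / h₂) * M₂ ≤ M₁ := by
    rw [mul_comm, ← le_div_iff₀ ht]
    apply csSup_le hne₂
    rintro y ⟨x, hx, rfl⟩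
    rw [le_div_iff₀ ht, mul_comm]
    have hmem : u ((h₁ / h₂) • x) < h₁ := by
      have hconvx := hconv.2 (mem_univ x) (mem_univ (0 : EuclideanSpace ℝ (Fin (n + 1))))
        ht.le (by linarith [(div_le_one hh₂).2 hle] : (0:ℝ) ≤ 1 - h₁ / h₂) (by ring)
      simp only [smul_zero, add_zero, hu0, mul_zero] at hconvx
      calc u ((h₁ / h₂) • x) ≤ (h₁ / h₂) * u x := by simpa using hconvx
        _ < (h₁ / h₂) * h₂ := by exact (mul_lt_mul_iff_right₀ ht).2 hx
        _ = h₁ := div_mul_cancel₀ _ hh₂.ne'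
    have hle' := le_csSup (hbdd h₁ hh₁) ⟨(h₁ / h₂) • x, hmem, rfl⟩
    simpa [hf, smul_eq_mul] using hle'
  have hs₁ : 0 < Real.sqrt h₁ := Real.sqrt_pos.2 hh₁
  have hs₂ : 0 < Real.sqrt h₂ := Real.sqrt_pos.2 hh₂
  have hq₁ : Real.sqrt h₁ ^ 2 = h₁ := Real.sq_sqrt hh₁.le
  have hq₂ : Real.sqrt h₂ ^ 2 = h₂ := Real.sq_sqrt hh₂.le
  have hrw : ∀ h : ℝ, 0 < h → h ^ (-(1 : ℝ) / 2) = (Real.sqrt h)⁻¹ := by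
    intro h hh
    rw [neg_div, Real.rpow_neg hh.le, Real.sqrt_eq_rpow]
  have hb₁ : b h₁ = (Real.sqrt h₁)⁻¹ * M₁ := by rw [hb h₁, hrw h₁ hh₁]
  have hb₂ : b h₂ = (Real.sqrt h₂)⁻¹ * M₂ := by rw [hb h₂, hrw h₂ hh₂]
  have hd₁ : Real.sqrt (h₁ / h₂) = Real.sqrt h₁ / Real.sqrt h₂ := Real.sqrt_div hh₁.le h₂
  have hd₂ : Real.sqrt (h₂ / h₁) = Real.sqrt h₂ / Real.sqrt h₁ := Real.sqrt_div hh₂.le h₁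
  have hsc : h₁ * M₂ ≤ h₂ * M₁ := by
    rw [div_mul_eq_mul_div, div_le_iff₀ hh₂] at hscale
    linarith
  have e : b h₁ / b h₂ = (M₁ * Real.sqrt h₂) / (Real.sqrt h₁ * M₂) := by
    rw [hb₁, hb₂]
    field_simp
  constructor
  · rw [e, hd₁, div_le_div_iff₀ hs₂ (mul_pos hs₁ hM₂)]
    nlinarith [hsc, hq₁, hq₂, mul_pos hs₁ hs₂]
  · rw [e, hd₂, div_le_div_iff₀ (mul_pos hs₁ hM₂) hs₁]
    nlinarith [hmono, mul_pos hs₁ hs₂]
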